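/- Every μ_p̂-null subset of 2^ω is the union of two μ_p̂-small sets. -/

import Mathlib

open MeasureTheory Filter Set
open scoped ENNReal

/-- `μ` is the product (Bernoulli) measure on `Bool^ι` determined by the sequence `p`:
a probability measure giving each cylinder set its natural product value. -/
def IsBernoulli {ι : Type*} (μ : Measure (ι → Bool)) (p : ι → ℝ≥0∞) : Prop :=
  IsProbabilityMeasure μ ∧
    ∀ (s : Finset ι) (f : ι → Bool),
      μ {x | ∀ i ∈ s, x i = f i} = ∏ i ∈ s, (if f i then p i else 1 - p i)

/-- The subset of `2^ω` corresponding to a filter on `ω`, via characteristic functions. -/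
def filterSet (F : Filter ℕ) : Set (ℕ → Bool) := {x | {n | x n = true} ∈ F}

/-- `H` is small with respect to `μ`: there is a partition of `ω` into consecutive finite
intervals `I n = [k n, k (n+1))` and sets `J n` of reals depending only on coordinates in
`I n`, such that every member of `H` is in infinitely many `J n`, and `∑ μ (J n) < ∞`. -/
def IsSmall (μ : Measure (ℕ → Bool)) (H : Set (ℕ → Bool)) : Prop :=
  ∃ (k : ℕ → ℕ) (J : ℕ → Set (ℕ → Bool)),
    k 0 = 0 ∧ StrictMono k ∧
    (∀ n (x y : ℕ → Bool), (∀ i, k n ≤ i → i < k (n + 1) → x i = y i) →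
      (x ∈ J n ↔ y ∈ J n)) ∧
    H ⊆ {x | {n | x ∈ J n}.Infinite} ∧
    ∑' n, μ (J n) ≠ ⊤

namespace NullTwoSmall

open scoped Classical

/-! ### Basic combinatorics of finitely determined sets -/

/-- The cylinder over the finite set `s` with pattern `w`. -/
def cylOn (s : Finset ℕ) (w : ℕ → Bool) : Set (ℕ → Bool) := {x | ∀ i ∈ s, x i = w i}

/-- `D` is determined by the coordinates in `s`. -/
def Dets (s : Finset ℕ) (D : Set (ℕ → Bool)) : Prop :=
  ∀ x y : ℕ → Bool, (∀ i ∈ s, x i = y i) → (x ∈ D ↔ y ∈ D)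

/-- The canonical pattern of `x` on `s` (valued `false` off `s`). -/
def patOf (s : Finset ℕ) (x : ℕ → Bool) : ℕ → Bool := fun i => if i ∈ s then x i else false

/-- All canonical patterns on `s`, as a finite set. -/
noncomputable def pats (s : Finset ℕ) : Finset (ℕ → Bool) :=
  Finset.univ.image
    (fun f : {i // i ∈ s} → Bool => fun i => if h : i ∈ s then f ⟨i, h⟩ else false)

lemma patOf_mem (s : Finset ℕ) (x : ℕ → Bool) : patOf s x ∈ pats s := by
  refine Finset.mem_image.mpr ⟨fun j : {i // i ∈ s} => x j.1, Finset.mem_univ _, ?_⟩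
  funext i; by_cases h : i ∈ s <;> simp [patOf, h]

lemma pats_false {s : Finset ℕ} {w : ℕ → Bool} (hw : w ∈ pats s) {i : ℕ} (hi : i ∉ s) :
    w i = false := by
  obtain ⟨f, -, rfl⟩ := Finset.mem_image.mp hw
  simp [hi]

lemma pats_ext {s : Finset ℕ} {w w' : ℕ → Bool} (hw : w ∈ pats s) (hw' : w' ∈ pats s)
    (h : ∀ i ∈ s, w i = w' i) : w = w' := by
  funext i
  by_cases hi : i ∈ s
  · exact h i hi
  · rw [pats_false hw hi, pats_false hw' hi]

lemma patOf_agree (s : Finset ℕ) (x : ℕ → Bool) : ∀ i ∈ s, x i = patOf s x i := by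
  intro i hi; simp [patOf, hi]

lemma cylOn_measurable (s : Finset ℕ) (w : ℕ → Bool) : MeasurableSet (cylOn s w) := by
  have h : cylOn s w = ⋂ i ∈ s, (fun x : ℕ → Bool => x i) ⁻¹' {w i} := by
    ext x; simp [cylOn]
  rw [h]
  exact MeasurableSet.biInter s.countable_toSet
    (fun i _ => (measurable_pi_apply i) (measurableSet_singleton (w i)))

lemma cylOn_isClosed (s : Finset ℕ) (w : ℕ → Bool) : IsClosed (cylOn s w) := by
  have h : cylOn s w = ⋂ i ∈ s, (fun x : ℕ → Bool => x i) ⁻¹' {w i} := by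
    ext x; simp [cylOn]
  rw [h]
  exact isClosed_biInter (fun i _ => (isClosed_discrete _).preimage (continuous_apply i))

/-- Decomposition of a finitely determined set into canonical cylinders. -/
lemma dets_eq {s : Finset ℕ} {D : Set (ℕ → Bool)} (hD : Dets s D) :
    D = ⋃ w ∈ (pats s).filter (· ∈ D), cylOn s w := by
  classical
  ext x
  constructor
  · intro hx
    refine Set.mem_biUnion (Finset.mem_filter.mpr ⟨patOf_mem s x, ?_⟩) ?_
    · exact (hD x (patOf s x) (patOf_agree s x)).mp hx
    · intro i hi; exact patOf_agree s x i hi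
  · intro hx
    obtain ⟨w, hw, hxc⟩ := Set.mem_iUnion₂.mp hx
    exact (hD x w (fun i hi => hxc i hi)).mpr (Finset.mem_filter.mp hw).2

lemma dets_measurableSet {s : Finset ℕ} {D : Set (ℕ → Bool)} (hD : Dets s D) :
    MeasurableSet D := by
  classical
  rw [dets_eq hD]
  exact (Finset.measurableSet_biUnion _ (fun w _ => cylOn_measurable s w))

lemma dets_isClosed {s : Finset ℕ} {D : Set (ℕ → Bool)} (hD : Dets s D) :
    IsClosed D := by
  classical
  rw [dets_eq hD]
  exact Set.Finite.isClosed_biUnion (Finset.finite_toSet _)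
    (fun w _ => cylOn_isClosed s w)

/-- The product weight of a pattern on `s`. -/
noncomputable def nu (p : ℕ → ℝ≥0∞) (s : Finset ℕ) (w : ℕ → Bool) : ℝ≥0∞ :=
  ∏ i ∈ s, (if w i then p i else 1 - p i)

/-- Measure of a finitely determined set as a finite sum of cylinder weights. -/
lemma meas_dets {μ : Measure (ℕ → Bool)} {p : ℕ → ℝ≥0∞} (hμ : IsBernoulli μ p)
    {s : Finset ℕ} {D : Set (ℕ → Bool)} (hD : Dets s D) :
    μ D = ∑ w ∈ (pats s).filter (· ∈ D), nu p s w := by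
  classical
  have hdisj : (↑((pats s).filter (· ∈ D)) : Set (ℕ → Bool)).PairwiseDisjoint (cylOn s) := by
    intro w hw w' hw' hne
    rw [Function.onFun, Set.disjoint_left]
    intro x hx hx'
    apply hne
    apply pats_ext (Finset.mem_filter.mp hw).1 (Finset.mem_filter.mp hw').1
    intro i hi
    rw [← hx i hi, ← hx' i hi]
  calc μ D = μ (⋃ w ∈ (pats s).filter (· ∈ D), cylOn s w) := by rw [← dets_eq hD]
    _ = ∑ w ∈ (pats s).filter (· ∈ D), μ (cylOn s w) :=
        measure_biUnion_finset hdisj (fun w _ => cylOn_measurable s w)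
    _ = ∑ w ∈ (pats s).filter (· ∈ D), nu p s w :=
        Finset.sum_congr rfl (fun w _ => hμ.2 s w)

/-! ### Sections over initial segments -/

/-- Merge of a "head" `w` below `a` with the tail of `x`. -/
def merge (a : ℕ) (w x : ℕ → Bool) : ℕ → Bool := fun i => if i < a then w i else x i

/-- The projection of `D` forgetting (via an existential) the coordinates below `a`. -/
def Sec (a : ℕ) (D : Set (ℕ → Bool)) : Set (ℕ → Bool) := {x | ∃ w, merge a w x ∈ D}

lemma mem_Sec_self {a : ℕ} {D : Set (ℕ → Bool)} {x : ℕ → Bool} (hx : x ∈ D) :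
    x ∈ Sec a D := by
  refine ⟨x, ?_⟩
  have h : merge a x x = x := funext fun i => by simp [merge]
  rwa [h]

lemma sec_dets {a N : ℕ} {D : Set (ℕ → Bool)} (hD : Dets (Finset.range N) D) :
    Dets (Finset.Ico a N) (Sec a D) := by
  have aux : ∀ x y : ℕ → Bool, (∀ i ∈ Finset.Ico a N, x i = y i) → x ∈ Sec a D → y ∈ Sec a D := by
    rintro x y hxy ⟨w, hw⟩
    refine ⟨w, (hD (merge a w x) (merge a w y) ?_).mp hw⟩
    intro i hi
    rw [Finset.mem_range] at hi
    by_cases hia : i < a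
    · simp [merge, hia]
    · have : i ∈ Finset.Ico a N := Finset.mem_Ico.mpr ⟨not_lt.mp hia, hi⟩
      simp [merge, hia, hxy i this]
  exact fun x y hxy => ⟨aux x y hxy, aux y x (fun i hi => (hxy i hi).symm)⟩

/-- The minimal product weight over the first `a` coordinates. -/
noncomputable def pro (p : ℕ → ℝ≥0∞) (a : ℕ) : ℝ≥0∞ := ∏ i ∈ Finset.range a, p i

section prop_p
variable {p : ℕ → ℝ≥0∞}

lemma p_ne_top (hp : ∀ n, 0 < p n ∧ p n ≤ 1 / 2) (i : ℕ) : p i ≠ ⊤ :=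
  ne_top_of_le_ne_top (by rw [one_div]; exact ENNReal.inv_ne_top.mpr two_ne_zero) (hp i).2

lemma p_le_ite (hp : ∀ n, 0 < p n ∧ p n ≤ 1 / 2) (i : ℕ) (b : Bool) :
    p i ≤ (if b then p i else 1 - p i) := by
  cases b
  · simp only [if_neg Bool.false_ne_true]
    refine ENNReal.le_sub_of_add_le_left (p_ne_top hp i) ?_
    calc p i + p i ≤ 1 / 2 + 1 / 2 := add_le_add (hp i).2 (hp i).2
      _ = 1 := ENNReal.add_halves 1
  · simp

lemma pro_ne_zero (hp : ∀ n, 0 < p n ∧ p n ≤ 1 / 2) (a : ℕ) : pro p a ≠ 0 :=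
  (CanonicallyOrderedAdd.prod_pos.mpr (fun i _ => (hp i).1)).ne'

lemma pro_le_one (hp : ∀ n, 0 < p n ∧ p n ≤ 1 / 2) (a : ℕ) : pro p a ≤ 1 :=
  Finset.prod_le_one (fun i _ => zero_le)
    (fun i _ => (hp i).2.trans (by exact ENNReal.half_le_self))

lemma pro_ne_top (hp : ∀ n, 0 < p n ∧ p n ≤ 1 / 2) (a : ℕ) : pro p a ≠ ⊤ :=
  ne_top_of_le_ne_top ENNReal.one_ne_top (pro_le_one hp a)

end prop_p

/-- The key estimate: projecting a determined set along an initial segment of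
coordinates costs at most a factor `(pro p a)⁻¹` in measure. -/
lemma sec_le {μ : Measure (ℕ → Bool)} {p : ℕ → ℝ≥0∞} (hμ : IsBernoulli μ p)
    (hp : ∀ n, 0 < p n ∧ p n ≤ 1 / 2) {a N : ℕ} (haN : a ≤ N)
    {D : Set (ℕ → Bool)} (hD : Dets (Finset.range N) D) :
    pro p a * μ (Sec a D) ≤ μ D := by
  classical
  have hSd : Dets (Finset.Ico a N) (Sec a D) := sec_dets hD
  rw [meas_dets hμ hSd, meas_dets hμ hD]
  set T := (pats (Finset.Ico a N)).filter (· ∈ Sec a D) with hTdef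
  set WD := (pats (Finset.range N)).filter (· ∈ D) with hWDdef
  have hwit : ∀ t : ℕ → Bool, ∃ w, t ∈ T →
      (w ∈ WD ∧ ∀ i ∈ Finset.Ico a N, w i = t i) := by
    intro t
    by_cases ht : t ∈ T
    · obtain ⟨u, hu⟩ := (Finset.mem_filter.mp ht).2
      refine ⟨patOf (Finset.range N) (merge a u t), fun _ => ⟨?_, ?_⟩⟩
      · exact Finset.mem_filter.mpr ⟨patOf_mem _ _,
          (hD (merge a u t) (patOf (Finset.range N) (merge a u t))
            (patOf_agree _ _)).mp hu⟩
      · intro i hi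
        obtain ⟨hai, hiN⟩ := Finset.mem_Ico.mp hi
        simp [patOf, merge, Finset.mem_range.mpr hiN, not_lt.mpr hai]
    · exact ⟨fun _ => false, fun h => absurd h ht⟩
  choose Φ hΦ using hwit
  have hterm : ∀ t ∈ T, pro p a * nu p (Finset.Ico a N) t ≤ nu p (Finset.range N) (Φ t) := by
    intro t ht
    obtain ⟨hmem, hagree⟩ := hΦ t ht
    have hdisj : Disjoint (Finset.range a) (Finset.Ico a N) := by
      rw [Finset.disjoint_left]
      intro i hi hi'
      exact absurd (Finset.mem_Ico.mp hi').1 (not_le.mpr (Finset.mem_range.mp hi))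
    have hsplit : nu p (Finset.range N) (Φ t)
        = nu p (Finset.range a) (Φ t) * nu p (Finset.Ico a N) (Φ t) := by
      have hru : Finset.range N = Finset.range a ∪ Finset.Ico a N := by
        rw [Finset.range_eq_Ico, Finset.range_eq_Ico, Finset.Ico_union_Ico_eq_Ico (Nat.zero_le a) haN]
      unfold nu
      rw [hru, Finset.prod_union hdisj]
    have h1 : pro p a ≤ nu p (Finset.range a) (Φ t) :=
      Finset.prod_le_prod' (fun i _ => p_le_ite hp i (Φ t i))
    have h2 : nu p (Finset.Ico a N) (Φ t) = nu p (Finset.Ico a N) t :=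
      Finset.prod_congr rfl (fun i hi => by rw [hagree i hi])
    rw [hsplit, h2]
    exact mul_le_mul_left h1 _
  have hinj : ∀ t ∈ T, ∀ t' ∈ T, Φ t = Φ t' → t = t' := by
    intro t ht t' ht' he
    apply pats_ext (Finset.mem_filter.mp ht).1 (Finset.mem_filter.mp ht').1
    intro i hi
    rw [← (hΦ t ht).2 i hi, ← (hΦ t' ht').2 i hi, he]
  calc pro p a * ∑ t ∈ T, nu p (Finset.Ico a N) t
      = ∑ t ∈ T, pro p a * nu p (Finset.Ico a N) t := Finset.mul_sum _ _ _
    _ ≤ ∑ t ∈ T, nu p (Finset.range N) (Φ t) := Finset.sum_le_sum hterm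
    _ = ∑ w ∈ T.image Φ, nu p (Finset.range N) w := (Finset.sum_image hinj).symm
    _ ≤ ∑ w ∈ WD, nu p (Finset.range N) w := by
        refine Finset.sum_le_sum_of_subset ?_
        intro w hw
        obtain ⟨t, ht, rfl⟩ := Finset.mem_image.mp hw
        exact (hΦ t ht).1

/-! ### The resolved part of an open set at a finite scale -/

/-- Points whose entire cylinder of length `N` is inside `W`. -/
def Vset (N : ℕ) (W : Set (ℕ → Bool)) : Set (ℕ → Bool) :=
  {x | ∀ y : ℕ → Bool, (∀ i, i < N → y i = x i) → y ∈ W}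

lemma Vset_dets (N : ℕ) (W : Set (ℕ → Bool)) : Dets (Finset.range N) (Vset N W) := by
  have aux : ∀ x y : ℕ → Bool, (∀ i ∈ Finset.range N, x i = y i) →
      x ∈ Vset N W → y ∈ Vset N W := by
    intro x y hxy hx z hz
    exact hx z (fun i hi => (hz i hi).trans (hxy i (Finset.mem_range.mpr hi)).symm)
  exact fun x y h => ⟨aux x y h, aux y x (fun i hi => (h i hi).symm)⟩

lemma Vset_subset {N : ℕ} {W : Set (ℕ → Bool)} : Vset N W ⊆ W :=
  fun x hx => hx x (fun _ _ => rfl)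

lemma Vset_mono {N M : ℕ} {W : Set (ℕ → Bool)} (h : N ≤ M) : Vset N W ⊆ Vset M W :=
  fun _ hx y hy => hx y (fun i hi => hy i (lt_of_lt_of_le hi h))

lemma exists_cyl {W : Set (ℕ → Bool)} (hW : IsOpen W) {x : ℕ → Bool} (hx : x ∈ W) :
    ∃ N, x ∈ Vset N W := by
  obtain ⟨I, u, hu, hsub⟩ := isOpen_pi_iff.mp hW x hx
  refine ⟨(I.sup id) + 1, fun y hy => hsub ?_⟩
  refine Set.mem_pi.mpr (fun i hi => ?_)
  have hmem : i ∈ I := Finset.mem_coe.mp hi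
  have hyi : y i = x i := hy i (Nat.lt_succ_of_le (Finset.le_sup (f := id) hmem))
  rw [hyi]
  exact (hu i hmem).2

lemma iUnion_Vset {W : Set (ℕ → Bool)} (hW : IsOpen W) : ⋃ N, Vset N W = W :=
  Set.Subset.antisymm (Set.iUnion_subset (fun _ => Vset_subset))
    (fun _ hx => Set.mem_iUnion.mpr (exists_cyl hW hx))

lemma exists_V {μ : Measure (ℕ → Bool)} {W : Set (ℕ → Bool)} (hWo : IsOpen W)
    (hWt : μ W ≠ ⊤) {δ : ℝ≥0∞} (hδ0 : δ ≠ 0) (hδt : δ ≠ ⊤) (n₀ : ℕ) :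
    ∃ N, n₀ < N ∧ μ (W \ Vset N W) ≤ δ := by
  by_cases hle : μ W ≤ δ
  · exact ⟨n₀ + 1, Nat.lt_succ_self _, le_trans (measure_mono Set.diff_subset) hle⟩
  push_neg at hle
  have hmon : Monotone (fun N => Vset N W) := fun N M h => Vset_mono h
  have hsup : μ W = ⨆ N, μ (Vset N W) := by
    conv_lhs => rw [← iUnion_Vset hWo]
    exact Directed.measure_iUnion hmon.directed_le
  have hWne : μ W ≠ 0 := by
    intro h0
    rw [h0] at hle
    exact (not_lt.mpr (zero_le (a := δ))) hle
  have hlt : μ W - δ < ⨆ N, μ (Vset N W) := by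
    rw [← hsup]
    exact ENNReal.sub_lt_self hWt hWne hδ0
  obtain ⟨N₁, hN₁⟩ := lt_iSup_iff.mp hlt
  refine ⟨max N₁ (n₀ + 1), lt_of_lt_of_le (Nat.lt_succ_self n₀) (le_max_right _ _), ?_⟩
  have hmono : μ (Vset N₁ W) ≤ μ (Vset (max N₁ (n₀ + 1)) W) :=
    measure_mono (Vset_mono (le_max_left _ _))
  have hVlt : μ W - δ < μ (Vset (max N₁ (n₀ + 1)) W) := lt_of_lt_of_le hN₁ hmono
  have hVm : MeasurableSet (Vset (max N₁ (n₀ + 1)) W) :=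
    dets_measurableSet (Vset_dets _ _)
  rw [measure_diff Vset_subset hVm.nullMeasurableSet
    (ne_top_of_le_ne_top hWt (measure_mono Vset_subset))]
  rw [tsub_le_iff_right]
  have := (ENNReal.sub_lt_iff_lt_right hδt hle.le).mp hVlt
  calc μ W ≤ μ (Vset (max N₁ (n₀ + 1)) W) + δ := this.le
    _ = δ + μ (Vset (max N₁ (n₀ + 1)) W) := add_comm _ _

/-! ### The recursive construction -/

/-- A stage of the construction: current grid points `gp ≤ gc` and an open set `W ⊇ H`
whose measure is controlled in terms of `gp`. -/
structure Stg (μ : Measure (ℕ → Bool)) (p : ℕ → ℝ≥0∞) (H : Set (ℕ → Bool)) where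
  r : ℕ
  gp : ℕ
  gc : ℕ
  W : Set (ℕ → Bool)
  hgpc : gp ≤ gc
  hWo : IsOpen W
  hWH : H ⊆ W
  hWb : μ W ≤ (4⁻¹ : ℝ≥0∞) ^ r * pro p gp

variable {μ : Measure (ℕ → Bool)} {p : ℕ → ℝ≥0∞} {H : Set (ℕ → Bool)}

/-- The initial stage. -/
def base (hμ : IsBernoulli μ p) : Stg μ p H where
  r := 0
  gp := 0
  gc := 0
  W := Set.univ
  hgpc := le_refl 0
  hWo := isOpen_univ
  hWH := Set.subset_univ H
  hWb := by
    haveI := hμ.1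
    simp [pro]

lemma step_ex (hμ : IsBernoulli μ p) (hp : ∀ n, 0 < p n ∧ p n ≤ 1 / 2) (hH : μ H = 0)
    (s : Stg μ p H) :
    ∃ t : Stg μ p H, t.r = s.r + 1 ∧ t.gp = s.gc ∧ s.gc < t.gc ∧
      s.W \ Vset t.gc s.W ⊆ t.W := by
  haveI := hμ.1
  set ε : ℝ≥0∞ := (4⁻¹) ^ (s.r + 1) * pro p s.gc with hεdef
  have hε0 : ε ≠ 0 := mul_ne_zero
    (pow_ne_zero _ (ENNReal.inv_ne_zero.mpr (by norm_num))) (pro_ne_zero hp _)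
  have hεt : ε ≠ ⊤ := ENNReal.mul_ne_top
    (ENNReal.pow_ne_top (ENNReal.inv_ne_top.mpr (by norm_num))) (pro_ne_top hp _)
  have hhalf0 : ε / 2 ≠ 0 := by
    simp only [ne_eq, ENNReal.div_eq_zero_iff, not_or]
    exact ⟨hε0, ENNReal.ofNat_ne_top⟩
  have hhalft : ε / 2 ≠ ⊤ := ne_top_of_le_ne_top hεt ENNReal.half_le_self
  obtain ⟨G, hHG, hGo, hGlt⟩ := Set.exists_isOpen_lt_of_lt H (ε / 2)
    (by rw [hH]; exact pos_iff_ne_zero.mpr hhalf0)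
  obtain ⟨N, hN, hVd⟩ := exists_V (μ := μ) s.hWo (measure_ne_top μ _) hhalf0 hhalft s.gc
  refine ⟨⟨s.r + 1, s.gc, N, G ∪ (s.W \ Vset N s.W), le_of_lt hN,
    hGo.union (s.hWo.sdiff (dets_isClosed (Vset_dets N s.W))),
    fun x hx => Or.inl (hHG hx), ?_⟩, rfl, rfl, hN, Set.subset_union_right⟩
  calc μ (G ∪ (s.W \ Vset N s.W)) ≤ μ G + μ (s.W \ Vset N s.W) := measure_union_le _ _
    _ ≤ ε / 2 + ε / 2 := add_le_add hGlt.le hVd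
    _ = ε := ENNReal.add_halves ε

variable (hμ : IsBernoulli μ p) (hp : ∀ n, 0 < p n ∧ p n ≤ 1 / 2) (hH : μ H = 0)

/-- The infinite chain of stages. -/
noncomputable def chain : ℕ → Stg μ p H
  | 0 => base hμ
  | (r + 1) => (step_ex hμ hp hH (chain r)).choose

lemma chain_spec (r : ℕ) :
    (chain hμ hp hH (r + 1)).r = (chain hμ hp hH r).r + 1 ∧
    (chain hμ hp hH (r + 1)).gp = (chain hμ hp hH r).gc ∧
    (chain hμ hp hH r).gc < (chain hμ hp hH (r + 1)).gc ∧
    (chain hμ hp hH r).W \ Vset ((chain hμ hp hH (r + 1)).gc) ((chain hμ hp hH r).W)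
      ⊆ (chain hμ hp hH (r + 1)).W :=
  (step_ex hμ hp hH (chain hμ hp hH r)).choose_spec

lemma chain_r (r : ℕ) : (chain hμ hp hH r).r = r := by
  induction r with
  | zero => rfl
  | succ r ih => rw [(chain_spec hμ hp hH r).1, ih]

/-- The grid. -/
noncomputable def gfun (r : ℕ) : ℕ := (chain hμ hp hH r).gc

noncomputable def gpfun (r : ℕ) : ℕ := (chain hμ hp hH r).gp

lemma g0 : gfun hμ hp hH 0 = 0 := rfl

lemma gp0 : gpfun hμ hp hH 0 = 0 := rfl

lemma gmono : StrictMono (gfun hμ hp hH) :=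
  strictMono_nat_of_lt_succ (fun n => (chain_spec hμ hp hH n).2.2.1)

lemma gp_succ (r : ℕ) : gpfun hμ hp hH (r + 1) = gfun hμ hp hH r :=
  (chain_spec hμ hp hH r).2.1

lemma gp_le (r : ℕ) : gpfun hμ hp hH r ≤ gfun hμ hp hH r := (chain hμ hp hH r).hgpc

/-- The resolved part of the `r`-th stage. -/
noncomputable def Sr (r : ℕ) : Set (ℕ → Bool) :=
  Vset (gfun hμ hp hH (r + 1)) ((chain hμ hp hH r).W)

/-- The projection of `Sr` onto the doubled interval `[gp r, g (r+1))`. -/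
noncomputable def Br (r : ℕ) : Set (ℕ → Bool) :=
  Sec (gpfun hμ hp hH r) (Sr hμ hp hH r)

lemma Sr_dets (r : ℕ) : Dets (Finset.range (gfun hμ hp hH (r + 1))) (Sr hμ hp hH r) :=
  Vset_dets _ _

lemma Br_dets (r : ℕ) :
    Dets (Finset.Ico (gpfun hμ hp hH r) (gfun hμ hp hH (r + 1))) (Br hμ hp hH r) :=
  sec_dets (Sr_dets hμ hp hH r)

lemma mem_Br (r : ℕ) {x : ℕ → Bool} (hx : x ∈ Sr hμ hp hH r) : x ∈ Br hμ hp hH r :=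
  mem_Sec_self hx

lemma Br_bound (r : ℕ) : μ (Br hμ hp hH r) ≤ (4⁻¹ : ℝ≥0∞) ^ r := by
  have haN : gpfun hμ hp hH r ≤ gfun hμ hp hH (r + 1) :=
    le_of_lt (lt_of_le_of_lt (gp_le hμ hp hH r) (gmono hμ hp hH (Nat.lt_succ_self r)))
  have h1 : pro p (gpfun hμ hp hH r) * μ (Br hμ hp hH r) ≤ μ (Sr hμ hp hH r) :=
    sec_le hμ hp haN (Sr_dets hμ hp hH r)
  have h2 : μ (Sr hμ hp hH r) ≤ (4⁻¹ : ℝ≥0∞) ^ r * pro p (gpfun hμ hp hH r) := by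
    refine le_trans (measure_mono Vset_subset) ?_
    have hb := (chain hμ hp hH r).hWb
    rwa [chain_r] at hb
  have h3 : pro p (gpfun hμ hp hH r) * μ (Br hμ hp hH r)
      ≤ pro p (gpfun hμ hp hH r) * (4⁻¹ : ℝ≥0∞) ^ r :=
    h1.trans (h2.trans_eq (mul_comm _ _))
  exact (ENNReal.mul_le_mul_iff_right (pro_ne_zero hp _) (pro_ne_top hp _)).mp h3

lemma capture {x : ℕ → Bool} (hx : x ∈ H) : {r | x ∈ Sr hμ hp hH r}.Infinite := by
  by_contra hfin
  rw [Set.not_infinite] at hfin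
  obtain ⟨M₀, hM₀⟩ := hfin.bddAbove
  have hM : ∀ r, M₀ < r → x ∉ Sr hμ hp hH r := by
    intro r hr hmem
    exact absurd (hM₀ hmem) (not_le.mpr hr)
  set M := M₀ + 1 with hMdef
  obtain ⟨ℓ, hℓ⟩ := exists_cyl (chain hμ hp hH M).hWo ((chain hμ hp hH M).hWH hx)
  have key : ∀ j, x ∈ Vset ℓ ((chain hμ hp hH (M + j)).W)
      ∧ gfun hμ hp hH (M + j + 1) < ℓ := by
    intro j
    induction j with
    | zero =>
      refine ⟨hℓ, ?_⟩
      by_contra hcon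
      push_neg at hcon
      exact hM M (by omega) (Vset_mono hcon hℓ)
    | succ j ih =>
      obtain ⟨ihV, ihg⟩ := ih
      have hstep : x ∈ Vset ℓ ((chain hμ hp hH (M + j + 1)).W) := by
        intro y hy
        have hyW : y ∈ (chain hμ hp hH (M + j)).W := ihV y hy
        have hynotS : y ∉ Sr hμ hp hH (M + j) := by
          intro hyS
          refine hM (M + j) (by omega) ?_
          exact (Vset_dets _ _ x y
            (fun i hi => (hy i (lt_trans (Finset.mem_range.mp hi) ihg)).symm)).mpr hyS
        exact (chain_spec hμ hp hH (M + j)).2.2.2 ⟨hyW, hynotS⟩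
      refine ⟨hstep, ?_⟩
      by_contra hcon
      push_neg at hcon
      exact hM (M + j + 1) (by omega) (Vset_mono hcon hstep)
  have h1 := (key ℓ).2
  have h2 : M + ℓ + 1 ≤ gfun hμ hp hH (M + ℓ + 1) := (gmono hμ hp hH).le_apply
  omega

end NullTwoSmall

open NullTwoSmall in
theorem null_eq_union_two_small (μ : Measure (ℕ → Bool)) (p : ℕ → ℝ≥0∞)
    (hp : ∀ n, 0 < p n ∧ p n ≤ 1 / 2) (hμ : IsBernoulli μ p)
    (H : Set (ℕ → Bool)) (hH : μ H = 0) :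
    ∃ A B : Set (ℕ → Bool), IsSmall μ A ∧ IsSmall μ B ∧ H = A ∪ B := by
  classical
  have hgmono := gmono hμ hp hH
  have hg0 : gfun hμ hp hH 0 = 0 := rfl
  have hquarter : ((4 : ℝ≥0∞)⁻¹) ≤ 1 := le_of_lt (by rw [ENNReal.inv_lt_one]; norm_num)
  have hgeom : (∑' m : ℕ, ((4 : ℝ≥0∞)⁻¹) ^ m) ≠ ⊤ := by
    rw [ENNReal.tsum_geometric]
    refine ENNReal.inv_ne_top.mpr ?_
    simp only [ne_eq, tsub_eq_zero_iff_le, not_le]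
    rw [ENNReal.inv_lt_one]
    norm_num
  have hsum : ∀ φ : ℕ → ℕ, (∀ m, m ≤ φ m) → (∑' m, μ (Br hμ hp hH (φ m))) ≠ ⊤ := by
    intro φ hφ
    refine ne_top_of_le_ne_top hgeom (ENNReal.tsum_le_tsum (fun m => ?_))
    exact (Br_bound hμ hp hH (φ m)).trans (pow_le_pow_of_le_one zero_le hquarter (hφ m))
  refine ⟨H ∩ {x | {n | x ∈ Br hμ hp hH (2 * n + 1)}.Infinite},
          H ∩ {x | {n | x ∈ Br hμ hp hH (2 * n)}.Infinite}, ?_, ?_, ?_⟩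
  · -- the even small set
    refine ⟨fun m => gfun hμ hp hH (2 * m), fun n => Br hμ hp hH (2 * n + 1), rfl,
      fun a b hab => hgmono (by omega), ?_, Set.inter_subset_right,
      hsum (fun n => 2 * n + 1) (fun m => by show m ≤ 2 * m + 1; omega)⟩
    intro n x y hagr
    have hdet := Br_dets hμ hp hH (2 * n + 1)
    rw [gp_succ] at hdet
    refine hdet x y (fun i hi => ?_)
    obtain ⟨h1, h2⟩ := Finset.mem_Ico.mp hi
    refine hagr i h1 ?_
    show i < gfun hμ hp hH (2 * (n + 1))
    have he : 2 * (n + 1) = 2 * n + 1 + 1 := by ring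
    rw [he]
    exact h2
  · -- the odd small set
    refine ⟨fun m => Nat.rec 0 (fun n _ => gfun hμ hp hH (2 * n + 1)) m,
      fun n => Br hμ hp hH (2 * n), rfl, ?_, ?_, Set.inter_subset_right,
      hsum (fun n => 2 * n) (fun m => by show m ≤ 2 * m; omega)⟩
    · refine strictMono_nat_of_lt_succ (fun n => ?_)
      cases n with
      | zero =>
        show (0 : ℕ) < gfun hμ hp hH 1
        have hlt := hgmono (Nat.lt_succ_self 0)
        rw [hg0] at hlt
        exact hlt
      | succ n =>
        show gfun hμ hp hH (2 * n + 1) < gfun hμ hp hH (2 * (n + 1) + 1)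
        exact hgmono (by omega)
    · intro n x y hagr
      have hdet := Br_dets hμ hp hH (2 * n)
      cases n with
      | zero =>
        refine hdet x y (fun i hi => ?_)
        obtain ⟨h1, h2⟩ := Finset.mem_Ico.mp hi
        exact hagr i (Nat.zero_le i) h2
      | succ n =>
        have he : gpfun hμ hp hH (2 * (n + 1)) = gfun hμ hp hH (2 * n + 1) := by
          show gpfun hμ hp hH ((2 * n + 1) + 1) = gfun hμ hp hH (2 * n + 1)
          exact gp_succ hμ hp hH (2 * n + 1)
        rw [he] at hdet
        refine hdet x y (fun i hi => ?_)
        obtain ⟨h1, h2⟩ := Finset.mem_Ico.mp hi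
        exact hagr i h1 h2
  · -- the union is H
    apply Set.Subset.antisymm
    · intro x hx
      by_contra hc
      rw [Set.mem_union] at hc
      push_neg at hc
      obtain ⟨hcA, hcB⟩ := hc
      have hfe : {n | x ∈ Br hμ hp hH (2 * n + 1)}.Finite := by
        rw [← Set.not_infinite]
        intro hinf
        exact hcA ⟨hx, hinf⟩
      have hfo : {n | x ∈ Br hμ hp hH (2 * n)}.Finite := by
        rw [← Set.not_infinite]
        intro hinf
        exact hcB ⟨hx, hinf⟩
      refine capture hμ hp hH hx ?_
      refine Set.Finite.subset
        ((hfo.image (fun m => 2 * m)).union (hfe.image (fun m => 2 * m + 1))) ?_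
      intro r hr
      have hrB : x ∈ Br hμ hp hH r := mem_Br hμ hp hH r hr
      rcases Nat.even_or_odd r with ⟨m, hm⟩ | ⟨m, hm⟩
      · refine Or.inl ⟨m, ?_, by show 2 * m = r; omega⟩
        show x ∈ Br hμ hp hH (2 * m)
        have he : 2 * m = r := by omega
        rw [he]
        exact hrB
      · refine Or.inr ⟨m, ?_, by show 2 * m + 1 = r; omega⟩
        show x ∈ Br hμ hp hH (2 * m + 1)
        have he : 2 * m + 1 = r := by omega
        rw [he]
        exact hrB
    · rintro x (⟨hx, -⟩ | ⟨hx, -⟩) <;> exact hx
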